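/- Let 0 = p₁ < p₂ < ⋯ < pₙ and let r* be the infimum of the program LowerOp with respect to (p₁,…,pₙ). Then for every instance I = (F_S, F_B) of bilateral trade in which F_S and F_B have finite first moments, max_{t ∈ {1,…,n}} W(I, p_t · OPT(I)) ≥ r* · OPT(I); i.e., the mechanism choosing the best price from {p₁·OPT(I), …, pₙ·OPT(I)} obtains welfare at least r* · OPT(I). -/

import Mathlib

open MeasureTheory Finset

namespace Stmt3Aux

noncomputable def clampR (Q : ℕ → ℝ) (n k : ℕ) (x : ℝ) : ℝ :=
  if k < n then max 0 (min 1 ((x - Q k) / (Q (k+1) - Q k))) else 0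

noncomputable def hfun (Q : ℕ → ℝ) (n i : ℕ) (x : ℝ) : ℝ :=
  if i = 0 then 1 else clampR Q n (i-1) x

noncomputable def sig (Q : ℕ → ℝ) (n i : ℕ) (x : ℝ) : ℝ :=
  hfun Q n i x - clampR Q n i x +
    (if i = n then 1 else 0) * (if Q n ≤ x then x / Q n - 1 else 0)

section Grid

variable {Q : ℕ → ℝ} {n : ℕ}

lemma Qmono (hQ : ∀ k, k < n → Q k < Q (k+1)) (a b : ℕ) (hab : a ≤ b) (hbn : b ≤ n) :
    Q a ≤ Q b := by
  induction b with
  | zero => simp [Nat.le_zero.mp hab]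
  | succ m ih =>
    rcases Nat.lt_succ_iff_lt_or_eq.mp (Nat.lt_succ_of_le hab) with h | h
    · exact (ih (by omega) (by omega)).trans (hQ m (by omega)).le
    · simp [h]

lemma Qnonneg (hQ0 : Q 0 = 0) (hQ : ∀ k, k < n → Q k < Q (k+1)) (a : ℕ) (han : a ≤ n) :
    0 ≤ Q a := by
  have := Qmono hQ 0 a (Nat.zero_le _) han
  simpa [hQ0] using this

lemma Qn_pos (hQ0 : Q 0 = 0) (hQ : ∀ k, k < n → Q k < Q (k+1)) (hn : 0 < n) : 0 < Q n := by
  have h1 : Q 0 < Q 1 := hQ 0 hn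
  have := Qmono hQ 1 n hn le_rfl
  simp only [hQ0] at h1; linarith

lemma clampR_nonneg (k : ℕ) (x : ℝ) : 0 ≤ clampR Q n k x := by
  unfold clampR; split <;> simp

lemma clampR_le_one (k : ℕ) (x : ℝ) : clampR Q n k x ≤ 1 := by
  unfold clampR; split
  · exact max_le (by norm_num) (min_le_left _ _)
  · norm_num

lemma clampR_eq_zero (hQ : ∀ k, k < n → Q k < Q (k+1)) {k : ℕ} {x : ℝ} (h : x ≤ Q k) :
    clampR Q n k x = 0 := by
  unfold clampR; split
  · rename_i hk
    have hΔ : (0:ℝ) < Q (k+1) - Q k := sub_pos.mpr (hQ k hk)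
    have h1 : (x - Q k) / (Q (k+1) - Q k) ≤ 0 :=
      div_nonpos_of_nonpos_of_nonneg (by linarith) hΔ.le
    have : min 1 ((x - Q k) / (Q (k+1) - Q k)) ≤ 0 := (min_le_right _ _).trans h1
    exact max_eq_left this
  · rfl

lemma clampR_eq_one (hQ : ∀ k, k < n → Q k < Q (k+1)) {k : ℕ} {x : ℝ} (hk : k < n)
    (h : Q (k+1) ≤ x) : clampR Q n k x = 1 := by
  unfold clampR; rw [if_pos hk]
  have hΔ : (0:ℝ) < Q (k+1) - Q k := sub_pos.mpr (hQ k hk)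
  have h1 : (1:ℝ) ≤ (x - Q k) / (Q (k+1) - Q k) := (one_le_div hΔ).mpr (by linarith)
  rw [min_eq_left h1]; exact max_eq_right zero_le_one

lemma clampR_succ_le (hQ : ∀ k, k < n → Q k < Q (k+1)) (k : ℕ) (x : ℝ) :
    clampR Q n (k+1) x ≤ clampR Q n k x := by
  by_cases hk1 : k + 1 < n
  · rcases le_total x (Q (k+1)) with hx | hx
    · rw [clampR_eq_zero hQ hx]; exact clampR_nonneg _ _
    · rw [clampR_eq_one hQ (by omega) hx]; exact clampR_le_one _ _
  · unfold clampR; rw [if_neg hk1]; exact clampR_nonneg _ _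

lemma clampR_mul (hQ : ∀ k, k < n → Q k < Q (k+1)) {k : ℕ} (hk : k < n) (x : ℝ) :
    clampR Q n k x * (Q (k+1) - Q k) = min x (Q (k+1)) - min x (Q k) := by
  have hΔ : (0:ℝ) < Q (k+1) - Q k := sub_pos.mpr (hQ k hk)
  rcases le_total x (Q k) with h | h
  · rw [clampR_eq_zero hQ h, min_eq_left h, min_eq_left (h.trans (hQ k hk).le)]; ring
  · rcases le_total (Q (k+1)) x with h2 | h2
    · rw [clampR_eq_one hQ hk h2, min_eq_right h2, min_eq_right h]; ring
    · unfold clampR; rw [if_pos hk]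
      have hr0 : (0:ℝ) ≤ (x - Q k) / (Q (k+1) - Q k) := div_nonneg (by linarith) hΔ.le
      have hr1 : (x - Q k) / (Q (k+1) - Q k) ≤ 1 := (div_le_one hΔ).mpr (by linarith)
      rw [min_eq_right hr1, max_eq_right hr0, div_mul_cancel₀ _ hΔ.ne',
        min_eq_left h2, min_eq_right h]

lemma sig_nonneg (hQ0 : Q 0 = 0) (hQ : ∀ k, k < n → Q k < Q (k+1)) (hn : 0 < n)
    (i : ℕ) (x : ℝ) : 0 ≤ sig Q n i x := by
  unfold sig
  have h1 : clampR Q n i x ≤ hfun Q n i x := by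
    unfold hfun
    cases i with
    | zero => simpa using clampR_le_one (Q := Q) (n := n) 0 x
    | succ m => simpa using clampR_succ_le hQ m x
  have h2 : (0:ℝ) ≤ (if i = n then 1 else 0) * (if Q n ≤ x then x / Q n - 1 else 0) := by
    apply mul_nonneg
    · split <;> norm_num
    · split
      · rename_i hx
        have hq := Qn_pos hQ0 hQ hn
        have : (1:ℝ) ≤ x / Q n := (one_le_div hq).mpr hx
        linarith
      · exact le_refl 0
  linarith

lemma hfun_succ (i : ℕ) (x : ℝ) : hfun Q n (i+1) x = clampR Q n i x := by
  simp [hfun]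

lemma clampR_top (x : ℝ) : clampR Q n n x = 0 := by
  simp [clampR]

lemma sum_sig (hQ0 : Q 0 = 0) (hQ : ∀ k, k < n → Q k < Q (k+1)) (hn : 0 < n) (x : ℝ) :
    ∑ i ∈ range (n+1), sig Q n i x = max 1 (x / Q n) := by
  have hq := Qn_pos hQ0 hQ hn
  unfold sig
  rw [sum_add_distrib]
  have e1 : ∑ i ∈ range (n+1), (hfun Q n i x - clampR Q n i x)
      = ∑ i ∈ range (n+1), (hfun Q n i x - hfun Q n (i+1) x) := by
    refine sum_congr rfl fun i _ => by rw [hfun_succ]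
  rw [e1, Finset.sum_range_sub' (fun i => hfun Q n i x)]
  have e2 : hfun Q n (n+1) x = 0 := by rw [hfun_succ, clampR_top]
  have e3 : hfun Q n 0 x = 1 := by simp [hfun]
  rw [e2, e3]
  have e4 : ∑ i ∈ range (n+1), (if i = n then (1:ℝ) else 0) * (if Q n ≤ x then x / Q n - 1 else 0)
      = (if Q n ≤ x then x / Q n - 1 else 0) := by
    rw [Finset.sum_eq_single n]
    · simp
    · intro b _ hb; simp [hb]
    · intro h; exact absurd (self_mem_range_succ n) h
  rw [e4]
  split
  · rename_i hx
    rw [max_eq_right ((one_le_div hq).mpr hx)]; ring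
  · rename_i hx
    rw [max_eq_left ((div_le_one hq).mpr (le_of_not_ge hx))]
    ring

lemma sum_sig_mul (hQ0 : Q 0 = 0) (hQ : ∀ k, k < n → Q k < Q (k+1)) (hn : 0 < n) (x : ℝ) :
    ∑ i ∈ range (n+1), sig Q n i x * Q i = max x 0 := by
  have hq := Qn_pos hQ0 hQ hn
  unfold sig
  have e0 : ∀ i ∈ range (n+1), (hfun Q n i x - clampR Q n i x +
      (if i = n then (1:ℝ) else 0) * (if Q n ≤ x then x / Q n - 1 else 0)) * Q i
      = (hfun Q n i x * Q i - hfun Q n (i+1) x * Q (i+1))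
        + hfun Q n (i+1) x * (Q (i+1) - Q i)
        + (if i = n then (1:ℝ) else 0) * ((if Q n ≤ x then x / Q n - 1 else 0) * Q n) := by
    intro i hi
    rw [hfun_succ]
    rcases eq_or_ne i n with h | h
    · simp only [h, if_pos rfl, clampR_top]; ring
    · simp only [if_neg h]; ring
  rw [sum_congr rfl e0, sum_add_distrib, sum_add_distrib,
    Finset.sum_range_sub' (fun i => hfun Q n i x * Q i)]
  have e2 : hfun Q n (n+1) x = 0 := by rw [hfun_succ, clampR_top]
  have e3 : hfun Q n 0 x = 1 := by simp [hfun]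
  rw [e2, e3, hQ0]
  have e4 : ∑ i ∈ range (n+1), hfun Q n (i+1) x * (Q (i+1) - Q i)
      = min x (Q n) - min x 0 := by
    rw [Finset.sum_range_succ]
    have : hfun Q n (n+1) x * (Q (n+1) - Q n) = 0 := by rw [e2]; ring
    rw [this, add_zero]
    have e5 : ∀ i ∈ range n, hfun Q n (i+1) x * (Q (i+1) - Q i)
        = min x (Q (i+1)) - min x (Q i) := by
      intro i hi
      rw [hfun_succ, clampR_mul hQ (mem_range.mp hi)]
    rw [sum_congr rfl e5, Finset.sum_range_sub (fun i => min x (Q i)), hQ0]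
  rw [e4]
  have e6 : ∑ i ∈ range (n+1), (if i = n then (1:ℝ) else 0) *
      ((if Q n ≤ x then x / Q n - 1 else 0) * Q n)
      = (if Q n ≤ x then x / Q n - 1 else 0) * Q n := by
    rw [Finset.sum_eq_single n]
    · simp
    · intro b _ hb; simp [hb]
    · intro h; exact absurd (self_mem_range_succ n) h
  rw [e6]
  rcases le_total x 0 with hx | hx
  · rw [min_eq_left (hx.trans hq.le), min_eq_left hx, if_neg (by linarith), max_eq_right hx]
    ring
  · rw [min_eq_right hx, max_eq_left hx]
    rcases le_or_gt (Q n) x with h2 | h2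
    · rw [min_eq_right h2, if_pos h2]
      field_simp
      ring
    · rw [min_eq_left h2.le, if_neg (not_le.mpr h2)]
      ring

lemma sig_eq_zero_high (hQ0 : Q 0 = 0) (hQ : ∀ k, k < n → Q k < Q (k+1)) (hn : 0 < n)
    {t i : ℕ} {x : ℝ} (hi : i ≤ n) (hti : t < i) (hx : x ≤ Q t) : sig Q n i x = 0 := by
  have h1 : x ≤ Q (i-1) := hx.trans (Qmono hQ t (i-1) (by omega) (by omega))
  have hh : hfun Q n i x = 0 := by
    unfold hfun; rw [if_neg (by omega)]
    exact clampR_eq_zero hQ h1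
  have htail : ¬ Q n ≤ x := by
    have : Q (i-1) < Q n := by
      rcases eq_or_lt_of_le (show i - 1 + 1 ≤ n by omega) with h | h
      · rw [← h]; exact hQ (i-1) (by omega)
      · exact (hQ (i-1) (by omega)).trans_le (Qmono hQ (i-1+1) n (by omega) le_rfl)
    intro h; linarith
  have : sig Q n i x ≤ 0 := by
    unfold sig; rw [hh, if_neg htail]
    have := clampR_nonneg (Q := Q) (n := n) i x
    simp; linarith
  linarith [sig_nonneg hQ0 hQ hn i x]

lemma sig_eq_zero_low (hQ0 : Q 0 = 0) (hQ : ∀ k, k < n → Q k < Q (k+1)) (hn : 0 < n)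
    {t i : ℕ} {x : ℝ} (ht : t ≤ n) (hit : i < t) (hx : Q t ≤ x) : sig Q n i x = 0 := by
  have h1 : Q (i+1) ≤ x := (Qmono hQ (i+1) t (by omega) ht).trans hx
  have hc : clampR Q n i x = 1 := clampR_eq_one hQ (by omega) h1
  have hh : hfun Q n i x ≤ 1 := by
    unfold hfun; split
    · exact le_refl 1
    · exact clampR_le_one _ _
  have : sig Q n i x ≤ 0 := by
    unfold sig; rw [hc, if_neg (by omega : ¬ i = n)]
    simp; linarith
  linarith [sig_nonneg hQ0 hQ hn i x]

lemma fin_split (t : Fin (n+1)) (f : Fin (n+1) → ℝ) :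
    ∑ i, f i = (∑ i ∈ univ.filter (· < t), f i) + f t + ∑ i ∈ univ.filter (t < ·), f i := by
  classical
  have e1 : univ.filter (fun i => ¬ i < t) = insert t (univ.filter (t < ·)) := by
    ext i
    simp only [mem_filter, mem_univ, true_and, mem_insert, not_lt]
    constructor
    · intro h; rcases eq_or_lt_of_le h with h | h
      · exact Or.inl h.symm
      · exact Or.inr h
    · rintro (rfl | h)
      · exact le_refl _
      · exact h.le
  rw [← Finset.sum_filter_add_sum_filter_not univ (· < t) f, e1,
    Finset.sum_insert (by simp)]
  ring

lemma cross_le (hQ0 : Q 0 = 0) (hQ : ∀ k, k < n → Q k < Q (k+1)) (hn : 0 < n)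
    (t : Fin (n+1)) (x y : ℝ) (hx : 0 ≤ x) (hy : 0 ≤ y) :
    (∑ i ∈ univ.filter (· < t), ∑ j ∈ univ.filter (t < ·),
      sig Q n i.1 x * sig Q n j.1 y * (Q j.1 - Q i.1))
    ≤ if x ≤ Q t.1 ∧ Q t.1 ≤ y then y - x else 0 := by
  classical
  have hq := Qn_pos hQ0 hQ hn
  have hRHS : (0:ℝ) ≤ if x ≤ Q t.1 ∧ Q t.1 ≤ y then y - x else 0 := by
    split
    · rename_i h; linarith [h.1, h.2]
    · exact le_refl 0
  by_cases hA0 : ∀ i ∈ univ.filter (· < t), sig Q n i.1 x = 0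
  · have : (∑ i ∈ univ.filter (· < t), ∑ j ∈ univ.filter (t < ·),
        sig Q n i.1 x * sig Q n j.1 y * (Q j.1 - Q i.1)) = 0 := by
      apply Finset.sum_eq_zero; intro i hi
      apply Finset.sum_eq_zero; intro j hj
      rw [hA0 i hi]; ring
    rw [this]; exact hRHS
  by_cases hB0 : ∀ j ∈ univ.filter (t < ·), sig Q n j.1 y = 0
  · have : (∑ i ∈ univ.filter (· < t), ∑ j ∈ univ.filter (t < ·),
        sig Q n i.1 x * sig Q n j.1 y * (Q j.1 - Q i.1)) = 0 := by
      apply Finset.sum_eq_zero; intro i hi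
      apply Finset.sum_eq_zero; intro j hj
      rw [hB0 j hj]; ring
    rw [this]; exact hRHS
  push_neg at hA0 hB0
  obtain ⟨i0, hi0m, hi0⟩ := hA0
  obtain ⟨j0, hj0m, hj0⟩ := hB0
  have hi0t : (i0 : ℕ) < t.1 := Fin.lt_def.mp (mem_filter.mp hi0m).2
  have hj0t : (t.1 : ℕ) < j0.1 := Fin.lt_def.mp (mem_filter.mp hj0m).2
  have hxt : x < Q t.1 := by
    by_contra h
    exact hi0 (sig_eq_zero_low hQ0 hQ hn (Fin.is_le t) hi0t (le_of_not_gt h))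
  have hyt : Q t.1 < y := by
    by_contra h
    exact hj0 (sig_eq_zero_high hQ0 hQ hn (Fin.is_le j0) hj0t (le_of_not_gt h))
  rw [if_pos ⟨hxt.le, hyt.le⟩]
  -- zero lemmas on the other sides
  have hsx0 : ∀ j ∈ univ.filter (t < ·), sig Q n j.1 x = 0 := fun j hj =>
    sig_eq_zero_high hQ0 hQ hn (Fin.is_le j)
      (Fin.lt_def.mp (mem_filter.mp hj).2) hxt.le
  have hsy0 : ∀ i ∈ univ.filter (· < t), sig Q n i.1 y = 0 := fun i hi =>
    sig_eq_zero_low hQ0 hQ hn (Fin.is_le t)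
      (Fin.lt_def.mp (mem_filter.mp hi).2) hyt.le
  set A := ∑ i ∈ univ.filter (· < t), sig Q n i.1 x with hA
  set Ax := ∑ i ∈ univ.filter (· < t), sig Q n i.1 x * Q i.1 with hAx
  set B := ∑ j ∈ univ.filter (t < ·), sig Q n j.1 y with hB
  set By := ∑ j ∈ univ.filter (t < ·), sig Q n j.1 y * Q j.1 with hBy
  set A' := sig Q n t.1 x with hA'
  set B' := sig Q n t.1 y with hB'
  -- full-sum identities
  have hsum_x : A + A' = 1 := by
    have h1 := fin_split t (fun i => sig Q n i.1 x)
    have h2 : ∑ i : Fin (n+1), sig Q n i.1 x = max 1 (x / Q n) := by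
      rw [Fin.sum_univ_eq_sum_range (fun k => sig Q n k x) (n+1)]
      exact sum_sig hQ0 hQ hn x
    have h3 : max 1 (x / Q n) = 1 := by
      apply max_eq_left
      have : x < Q n := hxt.trans_le (Qmono hQ t.1 n (Fin.is_le t) le_rfl)
      exact ((div_lt_one hq).mpr this).le
    have h4 : ∑ i ∈ univ.filter (t < ·), sig Q n i.1 x = 0 := Finset.sum_eq_zero hsx0
    rw [h2, h3, h4, add_zero] at h1
    linarith [h1]
  have hsum_x2 : Ax + A' * Q t.1 = x := by
    have h1 := fin_split t (fun i => sig Q n i.1 x * Q i.1)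
    have h2 : ∑ i : Fin (n+1), sig Q n i.1 x * Q i.1 = max x 0 := by
      rw [Fin.sum_univ_eq_sum_range (fun k => sig Q n k x * Q k) (n+1)]
      exact sum_sig_mul hQ0 hQ hn x
    have h4 : ∑ i ∈ univ.filter (t < ·), sig Q n i.1 x * Q i.1 = 0 :=
      Finset.sum_eq_zero (fun j hj => by rw [hsx0 j hj]; ring)
    rw [h2, max_eq_left hx, h4, add_zero] at h1
    linarith [h1]
  have hsum_y : B' + B = max 1 (y / Q n) := by
    have h1 := fin_split t (fun j => sig Q n j.1 y)
    have h2 : ∑ j : Fin (n+1), sig Q n j.1 y = max 1 (y / Q n) := by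
      rw [Fin.sum_univ_eq_sum_range (fun k => sig Q n k y) (n+1)]
      exact sum_sig hQ0 hQ hn y
    have h4 : ∑ i ∈ univ.filter (· < t), sig Q n i.1 y = 0 := Finset.sum_eq_zero hsy0
    rw [h2, h4, zero_add] at h1
    linarith [h1]
  have hsum_y2 : B' * Q t.1 + By = y := by
    have h1 := fin_split t (fun j => sig Q n j.1 y * Q j.1)
    have h2 : ∑ j : Fin (n+1), sig Q n j.1 y * Q j.1 = max y 0 := by
      rw [Fin.sum_univ_eq_sum_range (fun k => sig Q n k y * Q k) (n+1)]
      exact sum_sig_mul hQ0 hQ hn y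
    have h4 : ∑ i ∈ univ.filter (· < t), sig Q n i.1 y * Q i.1 = 0 :=
      Finset.sum_eq_zero (fun j hj => by rw [hsy0 j hj]; ring)
    rw [h2, max_eq_left hy, h4, zero_add] at h1
    linarith [h1]
  have hTy : 1 ≤ max 1 (y / Q n) := le_max_left _ _
  have hByB : Q t.1 * B ≤ By := by
    rw [hB, hBy, Finset.mul_sum]
    apply Finset.sum_le_sum
    intro j hj
    have hjt : (t.1 : ℕ) < j.1 := Fin.lt_def.mp (mem_filter.mp hj).2
    have : Q t.1 ≤ Q j.1 := Qmono hQ t.1 j.1 hjt.le (Fin.is_le j)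
    have hs := sig_nonneg hQ0 hQ hn j.1 y
    nlinarith
  have hAnn : 0 ≤ A := Finset.sum_nonneg fun i _ => sig_nonneg hQ0 hQ hn i.1 x
  have hAxnn : 0 ≤ Ax := Finset.sum_nonneg fun i _ => mul_nonneg (sig_nonneg hQ0 hQ hn i.1 x)
    (Qnonneg hQ0 hQ i.1 (Fin.is_le i))
  have hBnn : 0 ≤ B := Finset.sum_nonneg fun j _ => sig_nonneg hQ0 hQ hn j.1 y
  have hA'nn : 0 ≤ A' := sig_nonneg hQ0 hQ hn t.1 x
  have hB'nn : 0 ≤ B' := sig_nonneg hQ0 hQ hn t.1 y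
  have hQtnn : 0 ≤ Q t.1 := Qnonneg hQ0 hQ t.1 (Fin.is_le t)
  -- expand LHS
  have hexp : (∑ i ∈ univ.filter (· < t), ∑ j ∈ univ.filter (t < ·),
      sig Q n i.1 x * sig Q n j.1 y * (Q j.1 - Q i.1)) = A * By - Ax * B := by
    have e1 : ∀ i ∈ univ.filter (· < t), ∑ j ∈ univ.filter (t < ·),
        sig Q n i.1 x * sig Q n j.1 y * (Q j.1 - Q i.1)
        = sig Q n i.1 x * By - sig Q n i.1 x * Q i.1 * B := by
      intro i _
      rw [hBy, hB, Finset.mul_sum, Finset.mul_sum, ← Finset.sum_sub_distrib]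
      exact sum_congr rfl fun j _ => by ring
    rw [sum_congr rfl e1, Finset.sum_sub_distrib, ← Finset.sum_mul, ← Finset.sum_mul]
  rw [hexp]
  -- final algebra
  have key2 : y - x - (A * By - Ax * B)
      = (By - Q t.1 * B) * A' + (B - 1) * x + Q t.1 * B' := by
    linear_combination (-By) * hsum_x + B * hsum_x2 - hsum_y2
  have k1 : 0 ≤ (By - Q t.1 * B) * A' := mul_nonneg (by linarith) hA'nn
  have k4 : 0 ≤ Q t.1 * B' := mul_nonneg hQtnn hB'nn
  rcases le_or_gt 1 B with hB1 | hB1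
  · have k2 : 0 ≤ (B - 1) * x := mul_nonneg (by linarith) hx
    linarith
  · have k3 : (1 - B) * x ≤ (1 - B) * Q t.1 :=
      mul_le_mul_of_nonneg_left hxt.le (by linarith)
    have k5 : 0 ≤ Q t.1 * (B' + B - 1) := mul_nonneg hQtnn (by linarith [hTy])
    nlinarith [key2, k1, k3, k5]

lemma measurable_clampR (k : ℕ) : Measurable (clampR Q n k) := by
  unfold clampR
  split
  · exact (measurable_const.max (measurable_const.min
      ((measurable_id.sub_const _).div_const _)))
  · exact measurable_const

lemma measurable_sig (i : ℕ) : Measurable (sig Q n i) := by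
  unfold sig hfun
  apply Measurable.add
  · apply Measurable.sub
    · split
      · exact measurable_const
      · exact measurable_clampR _
    · exact measurable_clampR _
  · apply Measurable.mul
    · exact measurable_const
    · exact Measurable.ite (measurableSet_le measurable_const measurable_id)
        ((measurable_id.div_const _).sub_const 1) measurable_const

lemma sig_le_T (hQ0 : Q 0 = 0) (hQ : ∀ k, k < n → Q k < Q (k+1)) (hn : 0 < n)
    {i : ℕ} (hi : i ≤ n) (x : ℝ) : sig Q n i x ≤ max 1 (x / Q n) := by
  rw [← sum_sig hQ0 hQ hn x]
  exact Finset.single_le_sum (f := fun k => sig Q n k x)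
    (fun k _ => sig_nonneg hQ0 hQ hn k x) (mem_range.mpr (by omega))

lemma integrable_T (hQ0 : Q 0 = 0) (hQ : ∀ k, k < n → Q k < Q (k+1)) (hn : 0 < n)
    {μ : Measure ℝ} [IsProbabilityMeasure μ] (hμi : Integrable id μ) :
    Integrable (fun x => max 1 (x / Q n)) μ := by
  have hq := Qn_pos hQ0 hQ hn
  apply Integrable.mono' ((integrable_const (1:ℝ)).add (hμi.abs.div_const (Q n)))
  · exact (measurable_const.max (measurable_id.div_const _)).aestronglyMeasurable
  · apply Filter.Eventually.of_forall
    intro x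
    have h1 : (1:ℝ) ≤ max 1 (x / Q n) := le_max_left _ _
    rw [Real.norm_eq_abs, abs_of_nonneg (by linarith)]
    have h2 : x / Q n ≤ |x| / Q n := by
      gcongr
      exact le_abs_self x
    have h3 : (0:ℝ) ≤ |x| / Q n := by positivity
    show max 1 (x / Q n) ≤ 1 + |x| / Q n
    apply max_le (by linarith) (by linarith)

lemma integrable_sig (hQ0 : Q 0 = 0) (hQ : ∀ k, k < n → Q k < Q (k+1)) (hn : 0 < n)
    {μ : Measure ℝ} [IsProbabilityMeasure μ] (hμi : Integrable id μ)
    {i : ℕ} (hi : i ≤ n) : Integrable (sig Q n i) μ := by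
  apply Integrable.mono' (integrable_T hQ0 hQ hn hμi)
  · exact (measurable_sig i).aestronglyMeasurable
  · apply Filter.Eventually.of_forall
    intro x
    rw [Real.norm_eq_abs, abs_of_nonneg (sig_nonneg hQ0 hQ hn i x)]
    exact sig_le_T hQ0 hQ hn hi x

lemma max_le_sum (hQ0 : Q 0 = 0) (hQ : ∀ k, k < n → Q k < Q (k+1)) (hn : 0 < n)
    {x y : ℝ} (hx : 0 ≤ x) (hy : 0 ≤ y) :
    max x y ≤ ∑ i ∈ range (n+1), ∑ j ∈ range (n+1),
      sig Q n i x * sig Q n j y * max (Q i) (Q j) := by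
  have hq := Qn_pos hQ0 hQ hn
  apply max_le
  · calc x = max x 0 * 1 := by rw [max_eq_left hx, mul_one]
    _ ≤ (∑ i ∈ range (n+1), sig Q n i x * Q i) * (∑ j ∈ range (n+1), sig Q n j y) := by
        rw [sum_sig_mul hQ0 hQ hn x, sum_sig hQ0 hQ hn y]
        exact mul_le_mul_of_nonneg_left (le_max_left _ _) (le_max_right x 0)
    _ ≤ _ := by
        rw [Finset.sum_mul]
        apply Finset.sum_le_sum
        intro i hi
        rw [Finset.mul_sum]
        apply Finset.sum_le_sum
        intro j hj
        have h1 : Q i ≤ max (Q i) (Q j) := le_max_left _ _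
        have h2 : 0 ≤ sig Q n i x * sig Q n j y :=
          mul_nonneg (sig_nonneg hQ0 hQ hn i x) (sig_nonneg hQ0 hQ hn j y)
        nlinarith [mul_nonneg h2 (sub_nonneg.mpr h1)]
  · calc y = 1 * max y 0 := by rw [max_eq_left hy, one_mul]
    _ ≤ (∑ i ∈ range (n+1), sig Q n i x) * (∑ j ∈ range (n+1), sig Q n j y * Q j) := by
        rw [sum_sig_mul hQ0 hQ hn y, sum_sig hQ0 hQ hn x]
        exact mul_le_mul_of_nonneg_right (le_max_left _ _) (le_max_right y 0)
    _ ≤ _ := by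
        rw [Finset.sum_mul]
        apply Finset.sum_le_sum
        intro i hi
        rw [Finset.mul_sum]
        apply Finset.sum_le_sum
        intro j hj
        have h1 : Q j ≤ max (Q i) (Q j) := le_max_right _ _
        have h2 : 0 ≤ sig Q n i x * sig Q n j y :=
          mul_nonneg (sig_nonneg hQ0 hQ hn i x) (sig_nonneg hQ0 hQ hn j y)
        nlinarith [mul_nonneg h2 (sub_nonneg.mpr h1)]

end Grid

section MeasureFacts

open MeasureTheory

variable {μ ν : Measure ℝ} [IsProbabilityMeasure μ] [IsProbabilityMeasure ν]

lemma ae_nonneg_prod (hμ : μ (Set.Iio 0) = 0) (hν : ν (Set.Iio 0) = 0) :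
    ∀ᵐ z : ℝ × ℝ ∂(μ.prod ν), 0 ≤ z.1 ∧ 0 ≤ z.2 := by
  rw [Filter.eventually_iff, mem_ae_iff]
  have hnull : (μ.prod ν) ((Set.Iio 0) ×ˢ (Set.univ) ∪ (Set.univ) ×ˢ (Set.Iio 0)) = 0 := by
    apply measure_union_null
    · rw [Measure.prod_prod, hμ, zero_mul]
    · rw [Measure.prod_prod, hν, mul_zero]
  apply measure_mono_null _ hnull
  intro z hz
  simp only [Set.mem_compl_iff, Set.mem_setOf_eq, not_and_or, not_le] at hz
  rcases hz with h | h
  · exact Or.inl ⟨h, Set.mem_univ _⟩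
  · exact Or.inr ⟨Set.mem_univ _, h⟩

omit [IsProbabilityMeasure μ] in
lemma ae_nonneg_fst (hμ : μ (Set.Iio 0) = 0) : ∀ᵐ x ∂μ, (0:ℝ) ≤ x := by
  rw [Filter.eventually_iff, mem_ae_iff]
  apply measure_mono_null _ hμ
  intro x hx
  simpa using hx

end MeasureFacts
end Stmt3Aux




open MeasureTheory

/-- Expected welfare of the fixed price `p` on the bilateral-trade instance `(μ, ν)`. -/
noncomputable def welfare (μ ν : Measure ℝ) (p : ℝ) : ℝ :=
  ∫ z : ℝ × ℝ, (z.1 + if z.1 ≤ p ∧ p ≤ z.2 then z.2 - z.1 else 0) ∂(μ.prod ν)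

/-- Optimal welfare `OPT(I) = E[max(S,B)]`. -/
noncomputable def optWelfare (μ ν : Measure ℝ) : ℝ :=
  ∫ z : ℝ × ℝ, max z.1 z.2 ∂(μ.prod ν)

/-- The optimal value of the program `LowerOp` with respect to the price grid
`p : Fin (n+1) → ℝ`. -/
noncomputable def lowerOpValue (n : ℕ) (p : Fin (n + 1) → ℝ) : ℝ :=
  sInf { r : ℝ | ∃ s b : Fin (n + 1) → ℝ,
    (∀ i, 0 ≤ s i) ∧ (∀ i, 0 ≤ b i) ∧
    1 ≤ ∑ i, s i ∧ 1 ≤ ∑ i, b i ∧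
    ∑ i, s i ≤ 1 + 1 / p (Fin.last n) ∧ ∑ i, b i ≤ 1 + 1 / p (Fin.last n) ∧
    1 ≤ ∑ i, ∑ j, s i * b j * max (p i) (p j) ∧
    ∀ t : Fin (n + 1),
      ∑ i, s i * p i +
        ∑ i ∈ Finset.univ.filter (fun i => i < t),
          ∑ j ∈ Finset.univ.filter (fun j => t < j), s i * b j * (p j - p i) ≤ r }

/-- Given a grid `0 = p₁ < ⋯ < pₙ` and `r*` the value of `LowerOp`, for every
instance with finite first moments the best price among `{pₜ · OPT(I)}` obtains
welfare at least `r* · OPT(I)`. -/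
theorem stmt_3 (n : ℕ) (p : Fin (n + 1) → ℝ) (hp0 : p 0 = 0) (hp : StrictMono p)
    (μ ν : Measure ℝ) [IsProbabilityMeasure μ] [IsProbabilityMeasure ν]
    (hμ : μ (Set.Iio 0) = 0) (hν : ν (Set.Iio 0) = 0)
    (hμi : Integrable id μ) (hνi : Integrable id ν) :
    ∃ t : Fin (n + 1),
      lowerOpValue n p * optWelfare μ ν ≤ welfare μ ν (p t * optWelfare μ ν) := by
  classical
  have hOnn : 0 ≤ optWelfare μ ν := by
    apply integral_nonneg_of_ae
    filter_upwards [Stmt3Aux.ae_nonneg_prod hμ hν] with z hz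
    exact le_max_of_le_left hz.1
  have hwnn : ∀ c : ℝ, 0 ≤ c → 0 ≤ welfare μ ν c := by
    intro c hc
    apply integral_nonneg_of_ae
    filter_upwards [Stmt3Aux.ae_nonneg_prod hμ hν] with z hz
    simp only [Pi.zero_apply]
    split_ifs with h
    · linarith [h.2]
    · linarith [hz.1]
  by_cases hO0 : optWelfare μ ν ≤ 0
  · refine ⟨0, ?_⟩
    rw [le_antisymm hO0 hOnn, mul_zero, hp0, zero_mul]
    exact hwnn 0 le_rfl
  push_neg at hO0
  rcases Nat.eq_zero_or_pos n with hn | hn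
  · subst hn
    refine ⟨0, ?_⟩
    have hval : lowerOpValue 0 p = 0 := by
      unfold lowerOpValue
      have hset : { r : ℝ | ∃ s b : Fin (0 + 1) → ℝ,
          (∀ i, 0 ≤ s i) ∧ (∀ i, 0 ≤ b i) ∧
          1 ≤ ∑ i, s i ∧ 1 ≤ ∑ i, b i ∧
          ∑ i, s i ≤ 1 + 1 / p (Fin.last 0) ∧ ∑ i, b i ≤ 1 + 1 / p (Fin.last 0) ∧
          1 ≤ ∑ i, ∑ j, s i * b j * max (p i) (p j) ∧
          ∀ t : Fin (0 + 1),
            ∑ i, s i * p i +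
              ∑ i ∈ Finset.univ.filter (fun i => i < t),
                ∑ j ∈ Finset.univ.filter (fun j => t < j), s i * b j * (p j - p i) ≤ r }
          = (∅ : Set ℝ) := by
        rw [Set.eq_empty_iff_forall_notMem]
        rintro r ⟨s, b, -, -, -, -, -, -, hmax, -⟩
        rw [Fin.sum_univ_one (fun i => ∑ j, s i * b j * max (p i) (p j)),
          Fin.sum_univ_one (fun j => s 0 * b j * max (p 0) (p j)), hp0] at hmax
        simp only [max_self, mul_zero] at hmax
        linarith
      rw [hset, Real.sInf_empty]
    rw [hval, zero_mul, hp0, zero_mul]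
    exact hwnn 0 le_rfl
  -- main case
  set O := optWelfare μ ν with hOdef
  have hplast : 0 < p (Fin.last n) := by
    have h0 : (0 : Fin (n + 1)) < Fin.last n := by
      rw [Fin.lt_def]
      simpa using hn
    have := hp h0
    rwa [hp0] at this
  set Q : ℕ → ℝ := fun k => p ⟨min k n, Nat.lt_succ_of_le (min_le_right k n)⟩ * O with hQdef
  have hQt : ∀ t : Fin (n + 1), Q t.1 = p t * O := by
    intro t
    show p ⟨min t.1 n, _⟩ * O = p t * O
    congr 2
    exact Fin.ext (Nat.min_eq_left (Fin.is_le t))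
  have hQ0 : Q 0 = 0 := by
    have h := hQt 0
    simpa [hp0] using h
  have hQs : ∀ k, k < n → Q k < Q (k + 1) := by
    intro k hk
    have h1 : Q k = p ⟨k, by omega⟩ * O := by
      show p ⟨min k n, _⟩ * O = _
      congr 2
      exact Fin.ext (Nat.min_eq_left (by omega))
    have h2 : Q (k + 1) = p ⟨k + 1, by omega⟩ * O := by
      show p ⟨min (k + 1) n, _⟩ * O = _
      congr 2
      exact Fin.ext (Nat.min_eq_left (by omega))
    rw [h1, h2]
    refine mul_lt_mul_of_pos_right (hp ?_) hO0
    rw [Fin.lt_def]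
    simp
  have hq : 0 < Q n := Stmt3Aux.Qn_pos hQ0 hQs hn
  have hQlast : Q n = p (Fin.last n) * O := hQt (Fin.last n)
  have hintμ : ∀ i : Fin (n + 1), Integrable (Stmt3Aux.sig Q n i.1) μ :=
    fun i => Stmt3Aux.integrable_sig hQ0 hQs hn hμi (Fin.is_le i)
  have hintν : ∀ j : Fin (n + 1), Integrable (Stmt3Aux.sig Q n j.1) ν :=
    fun j => Stmt3Aux.integrable_sig hQ0 hQs hn hνi (Fin.is_le j)
  -- the witnesses
  set s : Fin (n + 1) → ℝ := fun i => ∫ x, Stmt3Aux.sig Q n i.1 x ∂μ with hsdef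
  set b : Fin (n + 1) → ℝ := fun j => ∫ y, Stmt3Aux.sig Q n j.1 y ∂ν with hbdef
  -- marginal sums
  have hsum_s : ∑ i, s i = ∫ x, max 1 (x / Q n) ∂μ := by
    have hpt : (fun x => ∑ i : Fin (n + 1), Stmt3Aux.sig Q n i.1 x)
        = fun x => max 1 (x / Q n) := by
      funext x
      rw [Fin.sum_univ_eq_sum_range (fun k => Stmt3Aux.sig Q n k x) (n + 1)]
      exact Stmt3Aux.sum_sig hQ0 hQs hn x
    show ∑ i : Fin (n + 1), (∫ x, Stmt3Aux.sig Q n i.1 x ∂μ) = _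
    rw [← integral_finset_sum Finset.univ (fun i _ => hintμ i), show (fun x => ∑ i : Fin (n + 1),
      Stmt3Aux.sig Q n i.1 x) = fun x => max 1 (x / Q n) from hpt]
  have hsum_b : ∑ j, b j = ∫ y, max 1 (y / Q n) ∂ν := by
    have hpt : (fun y => ∑ j : Fin (n + 1), Stmt3Aux.sig Q n j.1 y)
        = fun y => max 1 (y / Q n) := by
      funext y
      rw [Fin.sum_univ_eq_sum_range (fun k => Stmt3Aux.sig Q n k y) (n + 1)]
      exact Stmt3Aux.sum_sig hQ0 hQs hn y
    show ∑ j : Fin (n + 1), (∫ y, Stmt3Aux.sig Q n j.1 y ∂ν) = _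
    rw [← integral_finset_sum Finset.univ (fun j _ => hintν j), hpt]
  have hsum_sQ : ∑ i, s i * Q i.1 = ∫ x, max x 0 ∂μ := by
    have e1 : ∀ i : Fin (n + 1), s i * Q i.1 = ∫ x, Stmt3Aux.sig Q n i.1 x * Q i.1 ∂μ :=
      fun i => (integral_mul_const _ _).symm
    have hpt : (fun x => ∑ i : Fin (n + 1), Stmt3Aux.sig Q n i.1 x * Q i.1)
        = fun x => max x 0 := by
      funext x
      rw [Fin.sum_univ_eq_sum_range (fun k => Stmt3Aux.sig Q n k x * Q k) (n + 1)]
      exact Stmt3Aux.sum_sig_mul hQ0 hQs hn x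
    rw [Finset.sum_congr rfl (fun i _ => e1 i),
      ← integral_finset_sum Finset.univ (fun i _ => (hintμ i).mul_const _), hpt]
  have hTμ : Integrable (fun x => max 1 (x / Q n)) μ := Stmt3Aux.integrable_T hQ0 hQs hn hμi
  have hTν : Integrable (fun y => max 1 (y / Q n)) ν := Stmt3Aux.integrable_T hQ0 hQs hn hνi
  -- product integrability
  have hfst : Integrable (fun z : ℝ × ℝ => z.1) (μ.prod ν) := by
    have := hμi.mul_prod (integrable_const (1 : ℝ)) (ν := ν)
    simpa using this
  have hsnd : Integrable (fun z : ℝ × ℝ => z.2) (μ.prod ν) := by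
    have := (integrable_const (1 : ℝ)).mul_prod hνi (μ := μ)
    simpa using this
  have hmaxint : Integrable (fun z : ℝ × ℝ => max z.1 z.2) (μ.prod ν) := by
    apply Integrable.mono' (hfst.abs.add hsnd.abs)
      ((measurable_fst.max measurable_snd).aestronglyMeasurable)
    refine Filter.Eventually.of_forall fun z => ?_
    rw [Real.norm_eq_abs]
    calc |max z.1 z.2| ≤ max |z.1| |z.2| := abs_max_le_max_abs_abs
      _ ≤ |z.1| + |z.2| :=
        max_le (le_add_of_nonneg_right (abs_nonneg _)) (le_add_of_nonneg_left (abs_nonneg _))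
  have hmarg_fst : ∀ f : ℝ → ℝ, (∫ z : ℝ × ℝ, f z.1 ∂(μ.prod ν)) = ∫ x, f x ∂μ := by
    intro f
    have := integral_prod_mul (μ := μ) (ν := ν) f (fun _ => (1 : ℝ))
    simpa using this
  have hES : (∫ x, x ∂μ) ≤ O := by
    rw [← hmarg_fst (fun x => x)]
    exact integral_mono hfst hmaxint (fun z => le_max_left _ _)
  have hmarg_snd : ∀ g : ℝ → ℝ, (∫ z : ℝ × ℝ, g z.2 ∂(μ.prod ν)) = ∫ y, g y ∂ν := by
    intro g
    have := integral_prod_mul (μ := μ) (ν := ν) (fun _ => (1 : ℝ)) g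
    simpa using this
  have hEB : (∫ y, y ∂ν) ≤ O := by
    rw [← hmarg_snd (fun y => y)]
    exact integral_mono hsnd hmaxint (fun z => le_max_right _ _)
  -- bounds on ∫ T
  have hTub : ∀ (m : Measure ℝ) [IsProbabilityMeasure m], m (Set.Iio 0) = 0 →
      Integrable id m → (∫ x, x ∂m) ≤ O → ∫ x, max 1 (x / Q n) ∂m ≤ 1 + 1 / p (Fin.last n) := by
    intro m _ hm hmi hEm
    have h1 : ∫ x, max 1 (x / Q n) ∂m ≤ ∫ x, (1 + x / Q n) ∂m := by
      apply integral_mono_ae (Stmt3Aux.integrable_T hQ0 hQs hn hmi)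
        ((integrable_const 1).add (hmi.div_const _))
      filter_upwards [Stmt3Aux.ae_nonneg_fst hm] with x hx
      have hd : (0 : ℝ) ≤ x / Q n := div_nonneg hx hq.le
      show max 1 (x / Q n) ≤ 1 + x / Q n
      exact max_le (by linarith) (by linarith)
    have h2 : ∫ x, (1 + x / Q n) ∂m = 1 + (∫ x, x ∂m) / Q n := by
      have hdiv : Integrable (fun x : ℝ => x / Q n) m := hmi.div_const _
      rw [integral_add (integrable_const 1) hdiv]
      have e1 : ∫ x, (1 : ℝ) ∂m = 1 := by simp
      have e2 : ∫ x, x / Q n ∂m = (∫ x, x ∂m) / Q n := integral_div _ _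
      rw [e1, e2]
    have h3 : (∫ x, x ∂m) / Q n ≤ 1 / p (Fin.last n) := by
      have ha : (∫ x, x ∂m) / Q n ≤ O / Q n := by
        gcongr
      have hb : O / Q n = 1 / p (Fin.last n) := by
        rw [hQlast, mul_comm, ← div_div, div_self (ne_of_gt hO0)]
      linarith
    linarith
  -- double sums as product integrals
  have hint1 : ∀ (i j : Fin (n + 1)) (c : ℝ), Integrable (fun z : ℝ × ℝ =>
      Stmt3Aux.sig Q n i.1 z.1 * Stmt3Aux.sig Q n j.1 z.2 * c) (μ.prod ν) :=
    fun i j c => ((hintμ i).mul_prod (hintν j)).mul_const _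
  have hdouble : ∀ (I J : Finset (Fin (n + 1))) (c : Fin (n + 1) → Fin (n + 1) → ℝ),
      ∑ i ∈ I, ∑ j ∈ J, s i * b j * c i j
      = ∫ z : ℝ × ℝ, (∑ i ∈ I, ∑ j ∈ J,
          Stmt3Aux.sig Q n i.1 z.1 * Stmt3Aux.sig Q n j.1 z.2 * c i j) ∂(μ.prod ν) := by
    intro I J c
    rw [integral_finset_sum I (fun i _ => integrable_finset_sum J (fun j _ => hint1 i j (c i j)))]
    refine Finset.sum_congr rfl fun i _ => ?_
    rw [integral_finset_sum J (fun j _ => hint1 i j (c i j))]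
    refine Finset.sum_congr rfl fun j _ => ?_
    rw [integral_mul_const, integral_prod_mul]
  have hdr : ∀ f : ℕ → ℕ → ℝ, (∑ i : Fin (n + 1), ∑ j : Fin (n + 1), f i.1 j.1)
      = ∑ i ∈ Finset.range (n + 1), ∑ j ∈ Finset.range (n + 1), f i j := by
    intro f
    rw [Fin.sum_univ_eq_sum_range (fun k => ∑ j : Fin (n + 1), f k j.1) (n + 1)]
    exact Finset.sum_congr rfl fun i _ => Fin.sum_univ_eq_sum_range (fun k => f i k) (n + 1)
  -- the max constraint
  have hmaxcon : 1 ≤ ∑ i, ∑ j, s i * b j * max (p i) (p j) := by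
    have e1 : ∑ i, ∑ j, s i * b j * max (Q i.1) (Q j.1)
        = (∑ i, ∑ j, s i * b j * max (p i) (p j)) * O := by
      rw [Finset.sum_mul]
      refine Finset.sum_congr rfl fun i _ => ?_
      rw [Finset.sum_mul]
      refine Finset.sum_congr rfl fun j _ => ?_
      rw [hQt i, hQt j, ← max_mul_of_nonneg _ _ hOnn]
      ring
    have e2 : O ≤ ∑ i, ∑ j, s i * b j * max (Q i.1) (Q j.1) := by
      rw [hdouble Finset.univ Finset.univ (fun i j => max (Q i.1) (Q j.1))]
      apply integral_mono_ae hmaxint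
        (integrable_finset_sum _ (fun i _ => integrable_finset_sum _
          (fun j _ => hint1 i j (max (Q i.1) (Q j.1)))))
      filter_upwards [Stmt3Aux.ae_nonneg_prod hμ hν] with z hz
      have h := Stmt3Aux.max_le_sum hQ0 hQs hn hz.1 hz.2
      rw [hdr (fun i j => Stmt3Aux.sig Q n i z.1 * Stmt3Aux.sig Q n j z.2 * max (Q i) (Q j))]
      exact h
    rw [e1] at e2
    exact (le_mul_iff_one_le_left hO0).mp e2
  -- welfare integrand integrability
  have hWint : ∀ c : ℝ, Integrable (fun z : ℝ × ℝ =>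
      z.1 + if z.1 ≤ c ∧ c ≤ z.2 then z.2 - z.1 else 0) (μ.prod ν) := by
    intro c
    have hmeas : MeasurableSet {z : ℝ × ℝ | z.1 ≤ c ∧ c ≤ z.2} :=
      (measurableSet_le measurable_fst measurable_const).inter
        (measurableSet_le measurable_const measurable_snd)
    apply Integrable.mono' ((hfst.abs.add hfst.abs).add hsnd.abs)
    · exact (measurable_fst.add (Measurable.ite hmeas (measurable_snd.sub measurable_fst)
        measurable_const)).aestronglyMeasurable
    · refine Filter.Eventually.of_forall fun z => ?_
      rw [Real.norm_eq_abs]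
      show |z.1 + if z.1 ≤ c ∧ c ≤ z.2 then z.2 - z.1 else 0| ≤ |z.1| + |z.1| + |z.2|
      split_ifs with h
      · have e : z.1 + (z.2 - z.1) = z.2 := by ring
        rw [e]
        linarith [abs_nonneg z.1]
      · rw [add_zero]
        have := abs_nonneg z.2
        linarith [abs_nonneg z.1]
  have hmax10int : Integrable (fun z : ℝ × ℝ => max z.1 0) (μ.prod ν) := by
    apply Integrable.mono' hfst.abs ((measurable_fst.max measurable_const).aestronglyMeasurable)
    refine Filter.Eventually.of_forall fun z => ?_
    rw [Real.norm_eq_abs]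
    calc |max z.1 0| ≤ max |z.1| |0| := abs_max_le_max_abs_abs
      _ ≤ |z.1| := by simp
  -- choose the best price
  obtain ⟨t0, -, ht0⟩ := Finset.exists_max_image Finset.univ
    (fun t : Fin (n + 1) => welfare μ ν (p t * O)) ⟨0, Finset.mem_univ 0⟩
  set r : ℝ := welfare μ ν (p t0 * O) / O with hrdef
  -- the per-t constraints
  have hcon : ∀ t : Fin (n + 1),
      ∑ i, s i * p i +
        ∑ i ∈ Finset.univ.filter (fun i => i < t),
          ∑ j ∈ Finset.univ.filter (fun j => t < j), s i * b j * (p j - p i) ≤ r := by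
    intro t
    have eA : ∑ i, s i * p i = (∑ i, s i * Q i.1) / O := by
      rw [Finset.sum_div]
      refine Finset.sum_congr rfl fun i _ => ?_
      rw [hQt i, mul_div_assoc, mul_div_cancel_right₀ _ (ne_of_gt hO0)]
    have eB : (∑ i ∈ Finset.univ.filter (fun i => i < t),
          ∑ j ∈ Finset.univ.filter (fun j => t < j), s i * b j * (p j - p i))
        = (∑ i ∈ Finset.univ.filter (fun i => i < t),
          ∑ j ∈ Finset.univ.filter (fun j => t < j), s i * b j * (Q j.1 - Q i.1)) / O := by
      rw [Finset.sum_div]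
      refine Finset.sum_congr rfl fun i _ => ?_
      rw [Finset.sum_div]
      refine Finset.sum_congr rfl fun j _ => ?_
      rw [hQt i, hQt j, ← sub_mul, mul_div_assoc, mul_div_cancel_right₀ _ (ne_of_gt hO0)]
    have eC : ∑ i, s i * Q i.1 = ∫ z : ℝ × ℝ, max z.1 0 ∂(μ.prod ν) := by
      rw [hsum_sQ, hmarg_fst (fun x => max x 0)]
    have eD := hdouble (Finset.univ.filter (fun i => i < t))
      (Finset.univ.filter (fun j => t < j)) (fun i j => Q j.1 - Q i.1)
    have hcrossint : Integrable (fun z : ℝ × ℝ =>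
        ∑ i ∈ Finset.univ.filter (fun i => i < t),
          ∑ j ∈ Finset.univ.filter (fun j => t < j),
            Stmt3Aux.sig Q n i.1 z.1 * Stmt3Aux.sig Q n j.1 z.2 * (Q j.1 - Q i.1)) (μ.prod ν) :=
      integrable_finset_sum _ (fun i _ => integrable_finset_sum _
        (fun j _ => hint1 i j (Q j.1 - Q i.1)))
    have hWt : (∫ z : ℝ × ℝ, (max z.1 0 +
        ∑ i ∈ Finset.univ.filter (fun i => i < t),
          ∑ j ∈ Finset.univ.filter (fun j => t < j),
            Stmt3Aux.sig Q n i.1 z.1 * Stmt3Aux.sig Q n j.1 z.2 * (Q j.1 - Q i.1)) ∂(μ.prod ν))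
        ≤ welfare μ ν (p t * O) := by
      apply integral_mono_ae (hmax10int.add hcrossint) (hWint (p t * O))
      filter_upwards [Stmt3Aux.ae_nonneg_prod hμ hν] with z hz
      have hcross := Stmt3Aux.cross_le hQ0 hQs hn t z.1 z.2 hz.1 hz.2
      rw [hQt t] at hcross
      simp only [Pi.add_apply]
      rw [max_eq_left hz.1]
      split_ifs at hcross ⊢ with h
      · linarith
      · linarith
    have hcomb : ∑ i, s i * p i +
        (∑ i ∈ Finset.univ.filter (fun i => i < t),
          ∑ j ∈ Finset.univ.filter (fun j => t < j), s i * b j * (p j - p i))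
        ≤ welfare μ ν (p t * O) / O := by
      rw [eA, eB, ← add_div, eC, eD, ← integral_add hmax10int hcrossint]
      gcongr
    refine hcomb.trans ?_
    rw [hrdef]
    gcongr
    exact ht0 t (Finset.mem_univ t)
  -- membership
  have hmem : r ∈ { r : ℝ | ∃ s b : Fin (n + 1) → ℝ,
      (∀ i, 0 ≤ s i) ∧ (∀ i, 0 ≤ b i) ∧
      1 ≤ ∑ i, s i ∧ 1 ≤ ∑ i, b i ∧
      ∑ i, s i ≤ 1 + 1 / p (Fin.last n) ∧ ∑ i, b i ≤ 1 + 1 / p (Fin.last n) ∧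
      1 ≤ ∑ i, ∑ j, s i * b j * max (p i) (p j) ∧
      ∀ t : Fin (n + 1),
        ∑ i, s i * p i +
          ∑ i ∈ Finset.univ.filter (fun i => i < t),
            ∑ j ∈ Finset.univ.filter (fun j => t < j), s i * b j * (p j - p i) ≤ r } := by
    refine ⟨s, b, ?_, ?_, ?_, ?_, ?_, ?_, hmaxcon, hcon⟩
    · exact fun i => integral_nonneg (fun x => Stmt3Aux.sig_nonneg hQ0 hQs hn i.1 x)
    · exact fun j => integral_nonneg (fun y => Stmt3Aux.sig_nonneg hQ0 hQs hn j.1 y)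
    · rw [hsum_s]
      have h0 : ∫ x, (1 : ℝ) ∂μ = 1 := by simp
      exact le_trans (le_of_eq h0.symm)
        (integral_mono (integrable_const 1) hTμ (fun x => le_max_left _ _))
    · rw [hsum_b]
      have h0 : ∫ y, (1 : ℝ) ∂ν = 1 := by simp
      exact le_trans (le_of_eq h0.symm)
        (integral_mono (integrable_const 1) hTν (fun y => le_max_left _ _))
    · rw [hsum_s]
      exact hTub μ hμ hμi hES
    · rw [hsum_b]
      exact hTub ν hν hνi hEB
  -- lower bound of the feasible set
  have hbdd : BddBelow { r : ℝ | ∃ s b : Fin (n + 1) → ℝ,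
      (∀ i, 0 ≤ s i) ∧ (∀ i, 0 ≤ b i) ∧
      1 ≤ ∑ i, s i ∧ 1 ≤ ∑ i, b i ∧
      ∑ i, s i ≤ 1 + 1 / p (Fin.last n) ∧ ∑ i, b i ≤ 1 + 1 / p (Fin.last n) ∧
      1 ≤ ∑ i, ∑ j, s i * b j * max (p i) (p j) ∧
      ∀ t : Fin (n + 1),
        ∑ i, s i * p i +
          ∑ i ∈ Finset.univ.filter (fun i => i < t),
            ∑ j ∈ Finset.univ.filter (fun j => t < j), s i * b j * (p j - p i) ≤ r } := by
    refine ⟨0, fun rr hrr => ?_⟩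
    obtain ⟨s', b', hs', hb', -, -, -, -, -, hc⟩ := hrr
    have h0 := hc 0
    have hempty : (Finset.univ.filter (fun i : Fin (n + 1) => i < 0)) = ∅ := by
      apply Finset.filter_false_of_mem
      intro i _
      exact Fin.not_lt_zero i
    rw [hempty] at h0
    simp only [Finset.sum_empty, add_zero] at h0
    have hterm : 0 ≤ ∑ i, s' i * p i := by
      apply Finset.sum_nonneg
      intro i _
      apply mul_nonneg (hs' i)
      rw [← hp0]
      exact hp.monotone (Fin.zero_le i)
    linarith
  have hle : lowerOpValue n p ≤ r := csInf_le hbdd hmem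
  refine ⟨t0, ?_⟩
  calc lowerOpValue n p * O ≤ r * O := mul_le_mul_of_nonneg_right hle hOnn
    _ = welfare μ ν (p t0 * O) := by
      rw [hrdef, div_mul_cancel₀ _ (ne_of_gt hO0)]
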